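/- Covariance inequality for φ-mixing: if X and Y are bounded random variables measurable with respect to sub-σ-fields 𝒜 and ℬ respectively, with |X| ≤ M_X and |Y| ≤ M_Y almost surely, then |Cov(X,Y)| ≤ 2 φ(𝒜,ℬ) M_X M_Y. -/

import Mathlib

open MeasureTheory

section Aux

variable {Ω : Type*} {m : MeasurableSpace Ω} {μ : Measure Ω} [IsProbabilityMeasure μ]

lemma phiMix_key {𝒜 ℬ : MeasurableSpace Ω} {φ : ℝ}
    (hφ : ∀ A B : Set Ω, MeasurableSet[𝒜] A → MeasurableSet[ℬ] B → μ B ≠ 0 →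
      |(μ (A ∩ B)).toReal / (μ B).toReal - (μ A).toReal| ≤ φ)
    {A B : Set Ω} (hA : MeasurableSet[𝒜] A) (hB : MeasurableSet[ℬ] B) :
    |(μ (A ∩ B)).toReal - (μ A).toReal * (μ B).toReal| ≤ φ * (μ B).toReal := by
  rcases eq_or_ne (μ B) 0 with h0 | h0
  · have h1 : μ (A ∩ B) = 0 := measure_mono_null Set.inter_subset_right h0
    simp [h0, h1]
  · have hb : 0 < (μ B).toReal := ENNReal.toReal_pos h0 (measure_ne_top μ B)
    have h2 := mul_le_mul_of_nonneg_right (hφ A B hA hB h0) hb.le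
    calc |(μ (A ∩ B)).toReal - (μ A).toReal * (μ B).toReal|
        = |((μ (A ∩ B)).toReal / (μ B).toReal - (μ A).toReal) * (μ B).toReal| := by
          rw [sub_mul, div_mul_cancel₀ _ hb.ne']
      _ = |(μ (A ∩ B)).toReal / (μ B).toReal - (μ A).toReal| * (μ B).toReal := by
          rw [abs_mul, abs_of_nonneg hb.le]
      _ ≤ φ * (μ B).toReal := h2

lemma phiMix_key_min {𝒜 ℬ : MeasurableSpace Ω} (hℬ : ℬ ≤ m) {φ : ℝ}
    (hφ : ∀ A B : Set Ω, MeasurableSet[𝒜] A → MeasurableSet[ℬ] B → μ B ≠ 0 →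
      |(μ (A ∩ B)).toReal / (μ B).toReal - (μ A).toReal| ≤ φ)
    {A B : Set Ω} (hA : MeasurableSet[𝒜] A) (hB : MeasurableSet[ℬ] B) (h𝒜 : 𝒜 ≤ m) :
    |(μ (A ∩ B)).toReal - (μ A).toReal * (μ B).toReal|
      ≤ φ * min (μ B).toReal (μ Bᶜ).toReal := by
  have hφ0 : 0 ≤ φ := by
    have := hφ ∅ Set.univ (@MeasurableSet.empty Ω 𝒜) (@MeasurableSet.univ Ω ℬ) (by simp)
    simpa using this
  have h1 := phiMix_key hφ hA hB
  have h2 := phiMix_key hφ hA hB.compl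
  -- rewrite h2
  have hAm : MeasurableSet[m] A := h𝒜 _ hA
  have hBm : MeasurableSet[m] B := hℬ _ hB
  have hsplitA : (μ (A ∩ B)).toReal + (μ (A ∩ Bᶜ)).toReal = (μ A).toReal := by
    rw [← ENNReal.toReal_add (measure_ne_top _ _) (measure_ne_top _ _)]
    congr 1
    rw [← Set.diff_eq]
    exact measure_inter_add_diff A hBm
  have hsplitB : (μ B).toReal + (μ Bᶜ).toReal = 1 := by
    rw [← ENNReal.toReal_add (measure_ne_top _ _) (measure_ne_top _ _),
      measure_add_measure_compl hBm, measure_univ, ENNReal.toReal_one]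
  have hneg : (μ (A ∩ Bᶜ)).toReal - (μ A).toReal * (μ Bᶜ).toReal
      = -((μ (A ∩ B)).toReal - (μ A).toReal * (μ B).toReal) := by
    linear_combination hsplitA - (μ A).toReal * hsplitB
  rw [hneg, abs_neg] at h2
  rcases min_cases (μ B).toReal (μ Bᶜ).toReal with ⟨hmin, _⟩ | ⟨hmin, _⟩ <;> rw [hmin]
  · exact h1
  · exact h2


lemma phiMix_cov_set {𝒜 ℬ : MeasurableSpace Ω} (h𝒜 : 𝒜 ≤ m) (hℬ : ℬ ≤ m) {φ MX : ℝ}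
    (hφ : ∀ A B : Set Ω, MeasurableSet[𝒜] A → MeasurableSet[ℬ] B → μ B ≠ 0 →
      |(μ (A ∩ B)).toReal / (μ B).toReal - (μ A).toReal| ≤ φ)
    {X : Ω → ℝ} (hX : Measurable[𝒜] X) (hXb : ∀ᵐ ω ∂μ, |X ω| ≤ MX) (hMX : 0 ≤ MX)
    {B : Set Ω} (hB : MeasurableSet[ℬ] B) :
    |(∫ ω in B, X ω ∂μ) - (∫ ω, X ω ∂μ) * (μ B).toReal|
      ≤ 2 * φ * MX * min (μ B).toReal (μ Bᶜ).toReal := by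
  have hBm : MeasurableSet[m] B := hℬ _ hB
  have hXm : Measurable[m] X := hX.mono h𝒜 le_rfl
  letI : MeasurableSpace Ω := m
  have hXb' : ∀ᵐ ω ∂μ, ‖X ω‖ ≤ MX := by simpa [Real.norm_eq_abs] using hXb
  have hXint : Integrable X μ :=
    Integrable.mono' (integrable_const MX) hXm.aestronglyMeasurable hXb'
  set c : ℝ := (μ B).toReal with hc
  set W : Ω → ℝ := μ[B.indicator (fun _ => (1:ℝ))|𝒜] with hW
  have hWsm : StronglyMeasurable[𝒜] W := stronglyMeasurable_condExp
  have hWint : Integrable W μ := integrable_condExp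
  have hind_int : Integrable (B.indicator (fun _ => (1:ℝ))) μ :=
    (integrable_const (1:ℝ)).indicator hBm
  -- set integral of W - c over an 𝒜-measurable set
  have hsetW : ∀ A : Set Ω, MeasurableSet[𝒜] A →
      ∫ ω in A, (W ω - c) ∂μ = (μ (A ∩ B)).toReal - (μ A).toReal * c := by
    intro A hA
    have hAm : MeasurableSet[m] A := h𝒜 _ hA
    rw [integral_sub (hWint.integrableOn) (integrableOn_const (measure_lt_top μ A).ne)]
    rw [setIntegral_condExp h𝒜 hind_int hA, setIntegral_indicator hBm, setIntegral_const,
      setIntegral_const]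
    simp [smul_eq_mul, measureReal_def]
  have hWc_int : Integrable (fun ω => W ω - c) μ := hWint.sub (integrable_const c)
  have habs_int : Integrable (fun ω => |W ω - c|) μ := hWc_int.abs
  -- main bound on ∫ |W - c|
  have hWbound : ∫ ω, |W ω - c| ∂μ ≤ 2 * φ * min (μ B).toReal (μ Bᶜ).toReal := by
    set A : Set Ω := W ⁻¹' Set.Ici c with hA
    have hA𝒜 : MeasurableSet[𝒜] A := hWsm.measurable measurableSet_Ici
    have hAm : MeasurableSet[m] A := h𝒜 _ hA𝒜
    have hsplit : ∫ ω, |W ω - c| ∂μ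
        = (∫ ω in A, |W ω - c| ∂μ) + ∫ ω in Aᶜ, |W ω - c| ∂μ :=
      (integral_add_compl hAm habs_int).symm
    have hOnA : ∫ ω in A, |W ω - c| ∂μ = ∫ ω in A, (W ω - c) ∂μ := by
      refine setIntegral_congr_fun hAm fun ω hω => ?_
      have : c ≤ W ω := hω
      exact abs_of_nonneg (by linarith)
    have hOnAc : ∫ ω in Aᶜ, |W ω - c| ∂μ = -∫ ω in Aᶜ, (W ω - c) ∂μ := by
      rw [← integral_neg]
      refine setIntegral_congr_fun hAm.compl fun ω hω => ?_
      have h1 : ¬ c ≤ W ω := hω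
      rw [abs_of_nonpos (by linarith)]
    have h1 := phiMix_key_min hℬ hφ hA𝒜 hB h𝒜
    have h2 := phiMix_key_min hℬ hφ hA𝒜.compl hB h𝒜
    rw [hsplit, hOnA, hOnAc, hsetW A hA𝒜, hsetW Aᶜ hA𝒜.compl]
    have e1 : (μ (A ∩ B)).toReal - (μ A).toReal * c
        ≤ φ * min (μ B).toReal (μ Bᶜ).toReal := le_trans (le_abs_self _) h1
    have e2 : -((μ (Aᶜ ∩ B)).toReal - (μ Aᶜ).toReal * c)
        ≤ φ * min (μ B).toReal (μ Bᶜ).toReal := le_trans (neg_le_abs _) h2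
    linarith
  -- relate ∫_B X - ∫X * c to ∫ X * (W - c)
  have hXW_int : Integrable (fun ω => X ω * W ω) μ :=
    hWint.bdd_mul hXm.aestronglyMeasurable hXb'
  have hXind_int : Integrable (fun ω => X ω * B.indicator (fun _ => (1:ℝ)) ω) μ :=
    hind_int.bdd_mul hXm.aestronglyMeasurable hXb'
  have hpull : μ[(fun ω => X ω * B.indicator (fun _ => (1:ℝ)) ω)|𝒜]
      =ᵐ[μ] fun ω => X ω * W ω := by
    have := condExp_mul_of_stronglyMeasurable_left (m := 𝒜) (μ := μ) hX.stronglyMeasurable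
      (g := B.indicator (fun _ => (1:ℝ))) hXind_int hind_int
    exact this
  have hXWeq : ∫ ω, X ω * W ω ∂μ = ∫ ω in B, X ω ∂μ := by
    rw [← integral_congr_ae hpull, integral_condExp h𝒜]
    rw [← integral_indicator hBm]
    refine integral_congr_ae (Filter.Eventually.of_forall fun ω => ?_)
    by_cases hω : ω ∈ B <;> simp [Set.indicator_apply, hω]
  have hXZeq : ∫ ω, X ω * (W ω - c) ∂μ
      = (∫ ω in B, X ω ∂μ) - (∫ ω, X ω ∂μ) * c := by
    have heq : (fun ω => X ω * (W ω - c)) = fun ω => X ω * W ω - X ω * c := by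
      funext ω; ring
    rw [heq, integral_sub hXW_int (hXint.mul_const c), integral_mul_const, hXWeq]
  have hXWc_int : Integrable (fun ω => X ω * (W ω - c)) μ :=
    hWc_int.bdd_mul hXm.aestronglyMeasurable hXb'
  rw [← hXZeq]
  calc |∫ ω, X ω * (W ω - c) ∂μ| ≤ ∫ ω, |X ω * (W ω - c)| ∂μ := by
        simpa only [Real.norm_eq_abs] using
          norm_integral_le_integral_norm (μ := μ) (fun ω => X ω * (W ω - c))
    _ ≤ ∫ ω, MX * |W ω - c| ∂μ := by
        refine integral_mono_ae hXWc_int.abs (habs_int.const_mul MX) ?_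
        filter_upwards [hXb] with ω hω
        rw [abs_mul]
        exact mul_le_mul_of_nonneg_right hω (abs_nonneg _)
    _ = MX * ∫ ω, |W ω - c| ∂μ := integral_const_mul MX _
    _ ≤ MX * (2 * φ * min (μ B).toReal (μ Bᶜ).toReal) :=
        mul_le_mul_of_nonneg_left hWbound hMX
    _ = 2 * φ * MX * min (μ B).toReal (μ Bᶜ).toReal := by ring

end Aux

/-- Covariance inequality for φ-mixing: if `X`, `Y` are bounded and measurable
with respect to sub-σ-fields `𝒜`, `ℬ` whose φ-mixing coefficient is at most
`φ`, then `|Cov(X,Y)| ≤ 2 φ M_X M_Y`. -/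
theorem phi_mixing_covariance {Ω : Type*} {m : MeasurableSpace Ω} (μ : Measure Ω)
    [IsProbabilityMeasure μ] (𝒜 ℬ : MeasurableSpace Ω) (h𝒜 : 𝒜 ≤ m) (hℬ : ℬ ≤ m)
    (φ MX MY : ℝ)
    (hφ : ∀ A B : Set Ω, MeasurableSet[𝒜] A → MeasurableSet[ℬ] B → μ B ≠ 0 →
      |(μ (A ∩ B)).toReal / (μ B).toReal - (μ A).toReal| ≤ φ)
    (X Y : Ω → ℝ) (hX : Measurable[𝒜] X) (hY : Measurable[ℬ] Y)
    (hXb : ∀ᵐ ω ∂μ, |X ω| ≤ MX) (hYb : ∀ᵐ ω ∂μ, |Y ω| ≤ MY) :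
    |(∫ ω, X ω * Y ω ∂μ) - (∫ ω, X ω ∂μ) * (∫ ω, Y ω ∂μ)| ≤ 2 * φ * MX * MY := by
  have hXm : Measurable[m] X := hX.mono h𝒜 le_rfl
  have hYm : Measurable[m] Y := hY.mono hℬ le_rfl
  letI : MeasurableSpace Ω := m
  haveI : (MeasureTheory.ae μ).NeBot := ae_neBot.2 (IsProbabilityMeasure.ne_zero μ)
  obtain ⟨ω₀, hω₀⟩ := hXb.exists
  have hMX : 0 ≤ MX := le_trans (abs_nonneg _) hω₀
  obtain ⟨ω₁, hω₁⟩ := hYb.exists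
  have hMY : 0 ≤ MY := le_trans (abs_nonneg _) hω₁
  have hφ0 : 0 ≤ φ := by
    have := hφ ∅ Set.univ (@MeasurableSet.empty Ω 𝒜) (@MeasurableSet.univ Ω ℬ) (by simp)
    simpa using this
  have hXb' : ∀ᵐ ω ∂μ, ‖X ω‖ ≤ MX := by simpa [Real.norm_eq_abs] using hXb
  have hYb' : ∀ᵐ ω ∂μ, ‖Y ω‖ ≤ MY := by simpa [Real.norm_eq_abs] using hYb
  have hXint : Integrable X μ :=
    Integrable.mono' (integrable_const MX) hXm.aestronglyMeasurable hXb'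
  have hYint : Integrable Y μ :=
    Integrable.mono' (integrable_const MY) hYm.aestronglyMeasurable hYb'
  set c₀ : ℝ := ∫ ω, X ω ∂μ with hc₀
  set V : Ω → ℝ := μ[X|ℬ] with hV
  have hVsm : StronglyMeasurable[ℬ] V := stronglyMeasurable_condExp
  have hVint : Integrable V μ := integrable_condExp
  have hZint : Integrable (fun ω => V ω - c₀) μ := hVint.sub (integrable_const c₀)
  -- main estimate : ∫ |V - c₀| ≤ 2 φ MX
  have hZbound : ∫ ω, |V ω - c₀| ∂μ ≤ 2 * φ * MX := by
    set B : Set Ω := V ⁻¹' Set.Ici c₀ with hB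
    have hBℬ : MeasurableSet[ℬ] B := hVsm.measurable measurableSet_Ici
    have hBm : MeasurableSet[m] B := hℬ _ hBℬ
    have hsplit : ∫ ω, |V ω - c₀| ∂μ
        = (∫ ω in B, |V ω - c₀| ∂μ) + ∫ ω in Bᶜ, |V ω - c₀| ∂μ :=
      (integral_add_compl hBm hZint.abs).symm
    have hset : ∀ S : Set Ω, MeasurableSet[ℬ] S →
        ∫ ω in S, (V ω - c₀) ∂μ = (∫ ω in S, X ω ∂μ) - c₀ * (μ S).toReal := by
      intro S hS
      have hSm : MeasurableSet[m] S := hℬ _ hS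
      rw [integral_sub hVint.integrableOn
          (integrableOn_const (measure_lt_top μ S).ne),
        setIntegral_condExp hℬ hXint hS, setIntegral_const, smul_eq_mul, measureReal_def,
        mul_comm ((μ S).toReal) c₀]
    have hmin : min (μ B).toReal (μ Bᶜ).toReal ≤ 1/2 := by
      have hsum : (μ B).toReal + (μ Bᶜ).toReal = 1 := by
        rw [← ENNReal.toReal_add (measure_ne_top _ _) (measure_ne_top _ _),
          measure_add_measure_compl hBm, measure_univ, ENNReal.toReal_one]
      have h1 := min_le_left (μ B).toReal (μ Bᶜ).toReal
      have h2 := min_le_right (μ B).toReal (μ Bᶜ).toReal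
      linarith
    have hOnB : ∫ ω in B, |V ω - c₀| ∂μ = ∫ ω in B, (V ω - c₀) ∂μ := by
      refine setIntegral_congr_fun hBm fun ω hω => ?_
      have : c₀ ≤ V ω := hω
      exact abs_of_nonneg (by linarith)
    have hOnBc : ∫ ω in Bᶜ, |V ω - c₀| ∂μ = -∫ ω in Bᶜ, (V ω - c₀) ∂μ := by
      rw [← integral_neg]
      refine setIntegral_congr_fun hBm.compl fun ω hω => ?_
      have h1 : ¬ c₀ ≤ V ω := hω
      rw [abs_of_nonpos (by linarith)]
    have e1 := phiMix_cov_set h𝒜 hℬ hφ hX hXb hMX hBℬ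
    have e2 := phiMix_cov_set h𝒜 hℬ hφ hX hXb hMX hBℬ.compl
    rw [compl_compl] at e2
    have e1' : (∫ ω in B, X ω ∂μ) - c₀ * (μ B).toReal
        ≤ 2 * φ * MX * min (μ B).toReal (μ Bᶜ).toReal := (le_abs_self _).trans e1
    have e2' : -((∫ ω in Bᶜ, X ω ∂μ) - c₀ * (μ Bᶜ).toReal)
        ≤ 2 * φ * MX * min (μ Bᶜ).toReal (μ B).toReal := (neg_le_abs _).trans e2
    rw [min_comm] at e2'
    have h2φMX : (0:ℝ) ≤ 2 * φ * MX := mul_nonneg (mul_nonneg (by norm_num) hφ0) hMX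
    have key2 : 2 * φ * MX * min (μ B).toReal (μ Bᶜ).toReal ≤ φ * MX := by
      have := mul_le_mul_of_nonneg_left hmin h2φMX
      linarith
    rw [hsplit, hOnB, hOnBc, hset B hBℬ, hset Bᶜ hBℬ.compl]
    linarith
  -- pull-out and conclusion
  have hYV_int : Integrable (fun ω => Y ω * V ω) μ :=
    hVint.bdd_mul hYm.aestronglyMeasurable hYb'
  have hYX_int : Integrable (fun ω => Y ω * X ω) μ :=
    hXint.bdd_mul hYm.aestronglyMeasurable hYb'
  have hpull : μ[(fun ω => Y ω * X ω)|ℬ] =ᵐ[μ] fun ω => Y ω * V ω := by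
    have := condExp_mul_of_stronglyMeasurable_left (m := ℬ) (μ := μ) hY.stronglyMeasurable
      (g := X) hYX_int hXint
    exact this
  have hXY : ∫ ω, X ω * Y ω ∂μ = ∫ ω, Y ω * V ω ∂μ := by
    rw [← integral_congr_ae hpull, integral_condExp hℬ]
    exact integral_congr_ae (Filter.Eventually.of_forall fun ω => mul_comm _ _)
  have hfinal : (∫ ω, X ω * Y ω ∂μ) - c₀ * (∫ ω, Y ω ∂μ)
      = ∫ ω, Y ω * (V ω - c₀) ∂μ := by
    have heq : (fun ω => Y ω * (V ω - c₀)) = fun ω => Y ω * V ω - Y ω * c₀ := by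
      funext ω; ring
    rw [heq, integral_sub hYV_int (hYint.mul_const c₀), integral_mul_const, hXY]
    ring
  rw [hfinal]
  have hint : Integrable (fun ω => Y ω * (V ω - c₀)) μ :=
    hZint.bdd_mul hYm.aestronglyMeasurable hYb'
  calc |∫ ω, Y ω * (V ω - c₀) ∂μ| ≤ ∫ ω, |Y ω * (V ω - c₀)| ∂μ := by
        simpa only [Real.norm_eq_abs] using
          norm_integral_le_integral_norm (μ := μ) (fun ω => Y ω * (V ω - c₀))
    _ ≤ ∫ ω, MY * |V ω - c₀| ∂μ := by
        refine integral_mono_ae hint.abs (hZint.abs.const_mul MY) ?_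
        filter_upwards [hYb] with ω hω
        rw [abs_mul]
        exact mul_le_mul_of_nonneg_right hω (abs_nonneg _)
    _ = MY * ∫ ω, |V ω - c₀| ∂μ := integral_const_mul MY _
    _ ≤ MY * (2 * φ * MX) := mul_le_mul_of_nonneg_left hZbound hMY
    _ = 2 * φ * MX * MY := by ring
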